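/- For every n ∈ ℕ there exists a constant C = C(n) > 0 such that the following holds. Let S ⊂ ℝ^d with n < d, let x ∈ S and r > 0, and suppose α(x,r) < 1/8. Then β(x,r) ≤ 100·C·√(b̃(x,r)). -/

import Mathlib

open Metric Set

noncomputable section

/-- Gromov–Hausdorff distance via metrics on the disjoint union. -/
def ghDist (X Y : Type) [MetricSpace X] [MetricSpace Y] : ℝ :=
  sInf {r : ℝ | ∃ M : MetricSpace (X ⊕ Y),
    (∀ a b : X, @dist _ M.toPseudoMetricSpace.toDist (Sum.inl a) (Sum.inl b) = dist a b) ∧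
    (∀ a b : Y, @dist _ M.toPseudoMetricSpace.toDist (Sum.inr a) (Sum.inr b) = dist a b) ∧
    @Metric.hausdorffDist _ M.toPseudoMetricSpace (Set.range Sum.inl) (Set.range Sum.inr) ≤ r}

def planeHD {d : ℕ} (S : Set (EuclideanSpace ℝ (Fin d)))
    (Γ : AffineSubspace ℝ (EuclideanSpace ℝ (Fin d)))
    (x : EuclideanSpace ℝ (Fin d)) (r : ℝ) : ℝ :=
  r⁻¹ * Metric.hausdorffDist (S ∩ Metric.ball x r)
    ((Γ : Set (EuclideanSpace ℝ (Fin d))) ∩ Metric.ball x r)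

def planeSup {d : ℕ} (S : Set (EuclideanSpace ℝ (Fin d)))
    (Γ : AffineSubspace ℝ (EuclideanSpace ℝ (Fin d)))
    (x : EuclideanSpace ℝ (Fin d)) (r : ℝ) : ℝ :=
  r⁻¹ * sSup ((fun y => Metric.infDist y (Γ : Set (EuclideanSpace ℝ (Fin d)))) ''
    (S ∩ Metric.ball x r))

def alphaNum (n : ℕ) {d : ℕ} (S : Set (EuclideanSpace ℝ (Fin d)))
    (x : EuclideanSpace ℝ (Fin d)) (r : ℝ) : ℝ :=
  sInf {t : ℝ | ∃ Γ : AffineSubspace ℝ (EuclideanSpace ℝ (Fin d)),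
    x ∈ Γ ∧ Module.finrank ℝ Γ.direction = n ∧ t = planeHD S Γ x r}

def betaNum (n : ℕ) {d : ℕ} (S : Set (EuclideanSpace ℝ (Fin d)))
    (x : EuclideanSpace ℝ (Fin d)) (r : ℝ) : ℝ :=
  sInf {t : ℝ | ∃ Γ : AffineSubspace ℝ (EuclideanSpace ℝ (Fin d)),
    x ∈ Γ ∧ Module.finrank ℝ Γ.direction = n ∧ t = planeSup S Γ x r}

def aTilde (n : ℕ) {d : ℕ} (S : Set (EuclideanSpace ℝ (Fin d)))
    (x : EuclideanSpace ℝ (Fin d)) (r : ℝ) : ℝ :=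
  r⁻¹ * ghDist (↥(S ∩ Metric.ball x r)) (↥(Metric.ball (0 : EuclideanSpace ℝ (Fin n)) r))

def bTilde (n : ℕ) {d : ℕ} (S : Set (EuclideanSpace ℝ (Fin d)))
    (x : EuclideanSpace ℝ (Fin d)) (r : ℝ) : ℝ :=
  r⁻¹ * sInf {δ : ℝ | 0 < δ ∧
    ∃ f : ↥(S ∩ Metric.ball x r) → ↥(Metric.ball (0 : EuclideanSpace ℝ (Fin n)) r),
      ∀ a b, |dist (f a) (f b) - dist a b| < δ}

def alphaSeq (n : ℕ) {d : ℕ} (S : Set (EuclideanSpace ℝ (Fin d))) (i : ℤ) : ℝ :=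
  sSup ((fun x => alphaNum n S x ((2 : ℝ) ^ (-i))) '' (S ∩ Metric.ball 0 1))

def betaSeq (n : ℕ) {d : ℕ} (S : Set (EuclideanSpace ℝ (Fin d))) (i : ℤ) : ℝ :=
  sSup ((fun x => betaNum n S x ((2 : ℝ) ^ (-i))) '' (S ∩ Metric.ball 0 1))

def aTildeSeq (n : ℕ) {d : ℕ} (S : Set (EuclideanSpace ℝ (Fin d))) (ε : ℝ) (i : ℤ) : ℝ :=
  sSup ((fun x => aTilde n S x ((2 : ℝ) ^ (-i))) '' (S ∩ Metric.ball 0 (1 - ε)))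

def bTildeSeq (n : ℕ) {d : ℕ} (S : Set (EuclideanSpace ℝ (Fin d))) (ε : ℝ) (i : ℤ) : ℝ :=
  sSup ((fun x => bTilde n S x ((2 : ℝ) ^ (-i))) '' (S ∩ Metric.ball 0 (1 - ε)))

def planeDist {d : ℕ} (Γ₁ Γ₂ : AffineSubspace ℝ (EuclideanSpace ℝ (Fin d))) : ℝ :=
  Metric.hausdorffDist
    ((Γ₁.direction : Set (EuclideanSpace ℝ (Fin d))) ∩ Metric.closedBall 0 1)
    ((Γ₂.direction : Set (EuclideanSpace ℝ (Fin d))) ∩ Metric.closedBall 0 1)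

def simplexVol (n : ℕ) {d : ℕ} (p : Fin (n + 1) → EuclideanSpace ℝ (Fin d)) : ℝ :=
  Real.sqrt (Matrix.det (Matrix.of fun i j : Fin n =>
    (inner ℝ (p i.succ - p 0) (p j.succ - p 0) : ℝ))) / (n.factorial : ℝ)

def IsRealizingPlane (n : ℕ) {d : ℕ} (C' : ℝ) (S : Set (EuclideanSpace ℝ (Fin d)))
    (Γ : AffineSubspace ℝ (EuclideanSpace ℝ (Fin d))) (x : EuclideanSpace ℝ (Fin d))
    (r : ℝ) : Prop :=
  x ∈ Γ ∧ Module.finrank ℝ Γ.direction = n ∧ planeSup S Γ x r = betaNum n S x r ∧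
    planeHD S Γ x r ≤ C' * alphaNum n S x r

open Module Finset
open scoped RealInnerProductSpace

lemma sq_diff_aux {p q δ r : ℝ} (hp : 0 ≤ p) (hq : 0 ≤ q) (hp2 : p ≤ 2*r) (hq2 : q ≤ 2*r)
    (h : |p - q| ≤ δ) : |p^2 - q^2| ≤ 4*δ*r := by
  have h1 := abs_le.mp h
  have : |p^2 - q^2| = |p-q| * (p+q) := by
    rw [← abs_of_nonneg (by linarith : (0:ℝ) ≤ p + q), ← abs_mul]; ring_nf
  rw [this]
  have hδ0 : 0 ≤ δ := le_trans (abs_nonneg _) h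
  nlinarith [abs_nonneg (p-q)]

lemma inner_diff_bound {E F : Type*} [NormedAddCommGroup E] [InnerProductSpace ℝ E]
    [NormedAddCommGroup F] [InnerProductSpace ℝ F]
    {a b c : E} {a' b' c' : F} {δ r : ℝ}
    (hab : ‖a - b‖ ≤ 2*r) (hac : ‖a - c‖ ≤ 2*r) (hbc : ‖b - c‖ ≤ 2*r)
    (hab' : ‖a' - b'‖ ≤ 2*r) (hac' : ‖a' - c'‖ ≤ 2*r) (hbc' : ‖b' - c'‖ ≤ 2*r)
    (h1 : |‖a - b‖ - ‖a' - b'‖| ≤ δ) (h2 : |‖a - c‖ - ‖a' - c'‖| ≤ δ)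
    (h3 : |‖b - c‖ - ‖b' - c'‖| ≤ δ) :
    |⟪a - c, b - c⟫ - ⟪a' - c', b' - c'⟫| ≤ 6 * δ * r := by
  have e1 : ‖a - b‖^2 = ‖a-c‖^2 - 2*⟪a-c,b-c⟫ + ‖b-c‖^2 := by
    have := norm_sub_sq_real (a-c) (b-c)
    rwa [sub_sub_sub_cancel_right] at this
  have e1' : ‖a' - b'‖^2 = ‖a'-c'‖^2 - 2*⟪a'-c',b'-c'⟫ + ‖b'-c'‖^2 := by
    have := norm_sub_sq_real (a'-c') (b'-c')
    rwa [sub_sub_sub_cancel_right] at this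
  have d1 := sq_diff_aux (norm_nonneg _) (norm_nonneg _) hab hab' h1
  have d2 := sq_diff_aux (norm_nonneg _) (norm_nonneg _) hac hac' h2
  have d3 := sq_diff_aux (norm_nonneg _) (norm_nonneg _) hbc hbc' h3
  have k1 := abs_le.mp d1
  have k2 := abs_le.mp d2
  have k3 := abs_le.mp d3
  rw [abs_le]; constructor <;> nlinarith

lemma gram_diff {E F : Type*} [NormedAddCommGroup E] [InnerProductSpace ℝ E]
    [NormedAddCommGroup F] [InnerProductSpace ℝ F] {n : ℕ} (v : Fin n → E) (w : Fin n → F)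
    {ε : ℝ} (h : ∀ i j, |⟪v i, v j⟫ - ⟪w i, w j⟫| ≤ ε) (μ : Fin n → ℝ) :
    |‖∑ i, μ i • v i‖^2 - ‖∑ i, μ i • w i‖^2| ≤ ε * (∑ i, |μ i|)^2 := by
  have ev : ‖∑ i, μ i • v i‖^2 = ∑ i, ∑ j, μ i * μ j * ⟪v i, v j⟫ := by
    rw [← real_inner_self_eq_norm_sq, sum_inner]
    refine Finset.sum_congr rfl fun i _ => ?_
    rw [real_inner_smul_left, inner_sum, Finset.mul_sum]
    refine Finset.sum_congr rfl fun j _ => ?_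
    rw [real_inner_smul_right]; ring
  have ew : ‖∑ i, μ i • w i‖^2 = ∑ i, ∑ j, μ i * μ j * ⟪w i, w j⟫ := by
    rw [← real_inner_self_eq_norm_sq, sum_inner]
    refine Finset.sum_congr rfl fun i _ => ?_
    rw [real_inner_smul_left, inner_sum, Finset.mul_sum]
    refine Finset.sum_congr rfl fun j _ => ?_
    rw [real_inner_smul_right]; ring
  rw [ev, ew, ← Finset.sum_sub_distrib]
  calc |∑ i, (∑ j, μ i * μ j * ⟪v i, v j⟫ - ∑ j, μ i * μ j * ⟪w i, w j⟫)|
      ≤ ∑ i, |∑ j, μ i * μ j * ⟪v i, v j⟫ - ∑ j, μ i * μ j * ⟪w i, w j⟫| :=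
        Finset.abs_sum_le_sum_abs _ _
    _ ≤ ∑ i, ∑ j, |μ i| * |μ j| * ε := by
        refine Finset.sum_le_sum fun i _ => ?_
        rw [← Finset.sum_sub_distrib]
        calc |∑ j, (μ i * μ j * ⟪v i, v j⟫ - μ i * μ j * ⟪w i, w j⟫)|
            ≤ ∑ j, |μ i * μ j * ⟪v i, v j⟫ - μ i * μ j * ⟪w i, w j⟫| :=
              Finset.abs_sum_le_sum_abs _ _
          _ ≤ ∑ j, |μ i| * |μ j| * ε := by
              refine Finset.sum_le_sum fun j _ => ?_
              have : μ i * μ j * ⟪v i, v j⟫ - μ i * μ j * ⟪w i, w j⟫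
                  = (μ i * μ j) * (⟪v i, v j⟫ - ⟪w i, w j⟫) := by ring
              rw [this, abs_mul, abs_mul]
              exact mul_le_mul_of_nonneg_left (h i j) (mul_nonneg (abs_nonneg _) (abs_nonneg _))
    _ = ε * (∑ i, |μ i|)^2 := by
        rw [sq, Finset.sum_mul_sum, Finset.mul_sum]
        refine Finset.sum_congr rfl fun i _ => ?_
        rw [Finset.mul_sum]
        exact Finset.sum_congr rfl fun j _ => by ring

lemma coeff_bound {E : Type*} [NormedAddCommGroup E] [InnerProductSpace ℝ E] {n : ℕ} {r : ℝ}
    (hr : 0 < r) (v u : Fin n → E)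
    (hu : ∀ k, ‖u k‖ = 1) (hvn : ∀ i, ‖v i‖ ≤ 2*r)
    (horth : ∀ k i : Fin n, (i:ℕ) < (k:ℕ) → ⟪u k, v i⟫ = 0)
    (hlow : ∀ k, r/2 ≤ ⟪u k, v k⟫) (lam : Fin n → ℝ) :
    ∀ k : Fin n, |lam k| ≤ 2/r * 5^(n - 1 - (k:ℕ)) * ‖∑ i, lam i • v i‖ := by
  set s := ∑ i, lam i • v i with hs
  suffices H : ∀ j : ℕ, ∀ k : Fin n, n - 1 - (k:ℕ) = j →
      |lam k| ≤ 2/r * 5^(n - 1 - (k:ℕ)) * ‖s‖ by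
    exact fun k => H _ k rfl
  intro j
  induction j using Nat.strong_induction_on with
  | _ j IH =>
    intro k hk
    -- inner product of u k with s
    have hinner : ⟪u k, s⟫ = ∑ i, lam i * ⟪u k, v i⟫ := by
      rw [hs, inner_sum]
      exact Finset.sum_congr rfl fun i _ => real_inner_smul_right _ _ _
    set t : Fin n → ℝ := fun i => lam i * ⟪u k, v i⟫ with ht
    have hsplit : ∑ i, t i = t k + ∑ i ∈ univ.filter (fun i : Fin n => (k:ℕ) < (i:ℕ)), t i := by
      rw [← Finset.sum_filter_add_sum_filter_not univ (fun i : Fin n => (k:ℕ) < (i:ℕ))]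
      have : ∑ i ∈ univ.filter (fun i : Fin n => ¬ (k:ℕ) < (i:ℕ)), t i = t k := by
        refine Finset.sum_eq_single_of_mem k (by simp) fun i hi hne => ?_
        simp only [Finset.mem_filter] at hi
        have : (i:ℕ) < (k:ℕ) := by
          rcases lt_or_eq_of_le (Nat.le_of_not_lt hi.2) with h | h
          · exact h
          · exact absurd (Fin.ext h) hne
        simp [ht, horth k i this]
      rw [this]; ring
    -- bound each tail coefficient by IH
    have htail : ∀ i ∈ univ.filter (fun i : Fin n => (k:ℕ) < (i:ℕ)),
        |t i| ≤ (4 * ‖s‖) * 5^(n - 1 - (i:ℕ)) := by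
      intro i hi
      simp only [Finset.mem_filter] at hi
      have hji : n - 1 - (i:ℕ) < j := by
        have h1 := i.isLt; have h2 := k.isLt; omega
      have hIH := IH _ hji i rfl
      have hb : |⟪u k, v i⟫| ≤ 2*r := by
        calc |⟪u k, v i⟫| ≤ ‖u k‖ * ‖v i‖ := abs_real_inner_le_norm _ _
          _ ≤ 2*r := by rw [hu k, one_mul]; exact hvn i
      calc |t i| = |lam i| * |⟪u k, v i⟫| := abs_mul _ _
        _ ≤ (2/r * 5^(n - 1 - (i:ℕ)) * ‖s‖) * (2*r) := by
            apply mul_le_mul hIH hb (abs_nonneg _)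
            positivity
        _ = (4 * ‖s‖) * 5^(n - 1 - (i:ℕ)) * (r/r) := by ring
        _ = (4 * ‖s‖) * 5^(n - 1 - (i:ℕ)) := by
            rw [div_self hr.ne', mul_one]
    -- geometric sum bound
    have hgeo : ∑ i ∈ univ.filter (fun i : Fin n => (k:ℕ) < (i:ℕ)), (5:ℝ)^(n - 1 - (i:ℕ))
        ≤ ((5:ℝ)^(n - 1 - (k:ℕ)) - 1)/4 := by
      have hinj : Set.InjOn (fun i : Fin n => n - 1 - (i:ℕ))
          (univ.filter (fun i : Fin n => (k:ℕ) < (i:ℕ))) := by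
        intro a ha b hb hab
        have h1 := a.isLt; have h2 := b.isLt
        have hab' : n - 1 - (a:ℕ) = n - 1 - (b:ℕ) := hab
        exact Fin.ext (by omega)
      rw [← Finset.sum_image (fun a ha b hb => hinj ha hb)]
      have hsub : (univ.filter (fun i : Fin n => (k:ℕ) < (i:ℕ))).image
          (fun i : Fin n => n - 1 - (i:ℕ)) ⊆ Finset.range (n - 1 - (k:ℕ)) := by
        intro t ht
        simp only [Finset.mem_image, Finset.mem_filter] at ht
        obtain ⟨i, ⟨-, hki⟩, rfl⟩ := ht
        have := i.isLt; have := k.isLt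
        rw [Finset.mem_range]; omega
      calc ∑ t ∈ _, (5:ℝ)^t ≤ ∑ t ∈ Finset.range (n - 1 - (k:ℕ)), (5:ℝ)^t :=
            Finset.sum_le_sum_of_subset_of_nonneg hsub (fun _ _ _ => by positivity)
        _ = ((5:ℝ)^(n - 1 - (k:ℕ)) - 1)/(5 - 1) := geom_sum_eq (by norm_num) _
        _ = ((5:ℝ)^(n - 1 - (k:ℕ)) - 1)/4 := by norm_num
    -- assemble
    have hsum_tail : |∑ i ∈ univ.filter (fun i : Fin n => (k:ℕ) < (i:ℕ)), t i|
        ≤ (4*‖s‖) * (((5:ℝ)^(n - 1 - (k:ℕ)) - 1)/4) := by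
      calc |∑ i ∈ _, t i| ≤ ∑ i ∈ univ.filter (fun i : Fin n => (k:ℕ) < (i:ℕ)), |t i| :=
            Finset.abs_sum_le_sum_abs _ _
        _ ≤ ∑ i ∈ univ.filter (fun i : Fin n => (k:ℕ) < (i:ℕ)), (4*‖s‖) * 5^(n - 1 - (i:ℕ)) :=
            Finset.sum_le_sum htail
        _ = (4*‖s‖) * ∑ i ∈ univ.filter (fun i : Fin n => (k:ℕ) < (i:ℕ)), (5:ℝ)^(n - 1 - (i:ℕ)) := by
            rw [Finset.mul_sum]
        _ ≤ (4*‖s‖) * (((5:ℝ)^(n - 1 - (k:ℕ)) - 1)/4) := by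
            apply mul_le_mul_of_nonneg_left hgeo
            positivity
    have hks : |⟪u k, s⟫| ≤ ‖s‖ := by
      calc |⟪u k, s⟫| ≤ ‖u k‖ * ‖s‖ := abs_real_inner_le_norm _ _
        _ = ‖s‖ := by rw [hu k, one_mul]
    have htk : |t k| ≤ ‖s‖ + (4*‖s‖) * (((5:ℝ)^(n - 1 - (k:ℕ)) - 1)/4) := by
      have : t k = ⟪u k, s⟫ - ∑ i ∈ univ.filter (fun i : Fin n => (k:ℕ) < (i:ℕ)), t i := by
        rw [hinner] at *; rw [hsplit]; ring
      rw [this]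
      calc |_ - _| ≤ |⟪u k, s⟫| + |∑ i ∈ univ.filter (fun i : Fin n => (k:ℕ) < (i:ℕ)), t i| :=
            abs_sub _ _
        _ ≤ _ := add_le_add hks hsum_tail
    have hlk : |lam k| * (r/2) ≤ |t k| := by
      have h1 : r/2 ≤ |⟪u k, v k⟫| := le_trans (hlow k) (le_abs_self _)
      calc |lam k| * (r/2) ≤ |lam k| * |⟪u k, v k⟫| :=
            mul_le_mul_of_nonneg_left h1 (abs_nonneg _)
        _ = |t k| := (abs_mul _ _).symm
    have hP : (1:ℝ) ≤ (5:ℝ)^(n-1-(k:ℕ)) := one_le_pow₀ (by norm_num)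
    have hs0 : 0 ≤ ‖s‖ := norm_nonneg _
    rw [div_mul_eq_mul_div, div_mul_eq_mul_div, le_div_iff₀ hr]
    nlinarith

lemma exists_frame {d n : ℕ} {S : Set (EuclideanSpace ℝ (Fin d))}
    {Γ₀ : AffineSubspace ℝ (EuclideanSpace ℝ (Fin d))} {x : EuclideanSpace ℝ (Fin d)} {r : ℝ}
    (hr : 0 < r) (hxS : x ∈ S) (hxΓ : x ∈ Γ₀) (hrank : finrank ℝ Γ₀.direction = n)
    (hHD : Metric.hausdorffDist (S ∩ ball x r) ((Γ₀ : Set (EuclideanSpace ℝ (Fin d))) ∩ ball x r) < r/8) :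
    ∃ p u : Fin n → EuclideanSpace ℝ (Fin d),
      (∀ i, p i ∈ S ∩ ball x r) ∧ (∀ i, ‖u i‖ = 1) ∧
      (∀ k i : Fin n, (i:ℕ) < (k:ℕ) → ⟪u k, p i - x⟫ = 0) ∧
      (∀ k, r/2 ≤ ⟪u k, p k - x⟫) := by
  have hSne : (S ∩ ball x r).Nonempty := ⟨x, hxS, mem_ball_self hr⟩
  have hΓne : ((Γ₀ : Set (EuclideanSpace ℝ (Fin d))) ∩ ball x r).Nonempty :=
    ⟨x, hxΓ, mem_ball_self hr⟩
  have hbdd1 : Bornology.IsBounded (S ∩ ball x r) := isBounded_ball.subset inter_subset_right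
  have hbdd2 : Bornology.IsBounded ((Γ₀ : Set (EuclideanSpace ℝ (Fin d))) ∩ ball x r) :=
    isBounded_ball.subset inter_subset_right
  have hedist : EMetric.hausdorffEdist ((Γ₀ : Set (EuclideanSpace ℝ (Fin d))) ∩ ball x r)
      (S ∩ ball x r) ≠ ⊤ :=
    Metric.hausdorffEdist_ne_top_of_nonempty_of_bounded hΓne hSne hbdd2 hbdd1
  -- main induction
  suffices H : ∀ m : ℕ, m ≤ n → ∃ p u : Fin m → EuclideanSpace ℝ (Fin d),
      (∀ i, p i ∈ S ∩ ball x r) ∧ (∀ i, ‖u i‖ = 1) ∧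
      (∀ k i : Fin m, (i:ℕ) < (k:ℕ) → ⟪u k, p i - x⟫ = 0) ∧
      (∀ k, r/2 ≤ ⟪u k, p k - x⟫) by
    exact H n le_rfl
  intro m
  induction m with
  | zero =>
    intro _
    exact ⟨Fin.elim0, Fin.elim0, fun i => i.elim0, fun i => i.elim0,
      fun k => k.elim0, fun k => k.elim0⟩
  | succ m ih =>
    intro hmn
    obtain ⟨p, u, hpS, hun, hor, hlo⟩ := ih (Nat.le_of_succ_le hmn)
    -- find a new unit direction in Γ₀.direction orthogonal to all p i - x
    set V : Submodule ℝ (EuclideanSpace ℝ (Fin d)) :=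
      Submodule.span ℝ (Set.range (fun i : Fin m => p i - x)) with hV
    set W : Submodule ℝ (EuclideanSpace ℝ (Fin d)) := Γ₀.direction ⊓ Vᗮ with hW
    have hVle : finrank ℝ V ≤ m := by
      have := finrank_range_le_card (R := ℝ) (fun i : Fin m => p i - x)
      simpa [Set.finrank] using this
    have hWpos : 0 < finrank ℝ W := by
      rw [hW]
      have h1 := Submodule.finrank_sup_add_finrank_inf_eq Γ₀.direction Vᗮ
      have h2 : finrank ℝ ↥(Γ₀.direction ⊔ Vᗮ) ≤ d := by
        apply le_trans (Submodule.finrank_le _)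
        simp [finrank_euclideanSpace_fin]
      have h3 : finrank ℝ ↥V + finrank ℝ ↥Vᗮ = d := by
        have := Submodule.finrank_add_finrank_orthogonal (𝕜 := ℝ) V
        rwa [finrank_euclideanSpace_fin] at this
      have hnd : n ≤ d := by
        rw [← hrank]
        exact le_trans (Submodule.finrank_le _) (le_of_eq (finrank_euclideanSpace_fin))
      rw [hrank] at h1
      have := m.lt_succ_self
      omega
    have hWne : W ≠ ⊥ := by
      intro h
      rw [h, finrank_bot] at hWpos
      exact lt_irrefl 0 hWpos
    obtain ⟨w, hwW, hw0⟩ := (Submodule.ne_bot_iff W).mp hWne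
    set e : EuclideanSpace ℝ (Fin d) := ‖w‖⁻¹ • w with he
    have hwn : ‖w‖ ≠ 0 := norm_ne_zero_iff.mpr hw0
    have hen : ‖e‖ = 1 := by
      rw [he, norm_smul, norm_inv, norm_norm, inv_mul_cancel₀ hwn]
    have heW : e ∈ W := Submodule.smul_mem _ _ hwW
    have heΓ : e ∈ Γ₀.direction := heW.1
    have heV : e ∈ Vᗮ := heW.2
    have heorth : ∀ i : Fin m, ⟪e, p i - x⟫ = 0 := by
      intro i
      have : p i - x ∈ V := Submodule.subset_span ⟨i, rfl⟩
      have := (Submodule.mem_orthogonal V e).mp heV _ this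
      rw [real_inner_comm]; exact this
    -- the target point on the plane
    set g : EuclideanSpace ℝ (Fin d) := (3*r/4) • e + x with hg
    have hgΓ : g ∈ (Γ₀ : Set (EuclideanSpace ℝ (Fin d))) := by
      have := AffineSubspace.vadd_mem_of_mem_direction
        (Submodule.smul_mem Γ₀.direction (3*r/4) heΓ) hxΓ
      simpa [hg] using this
    have hgball : g ∈ ball x r := by
      rw [mem_ball, dist_eq_norm, hg]
      simp only [add_sub_cancel_right]
      rw [norm_smul, hen, mul_one]
      rw [Real.norm_eq_abs, abs_of_nonneg (by linarith)]
      linarith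
    -- find a point of S near g
    have hginf : Metric.infDist g (S ∩ ball x r) < r/8 := by
      calc Metric.infDist g (S ∩ ball x r)
          ≤ Metric.hausdorffDist ((Γ₀ : Set (EuclideanSpace ℝ (Fin d))) ∩ ball x r)
            (S ∩ ball x r) :=
            Metric.infDist_le_hausdorffDist_of_mem ⟨hgΓ, hgball⟩ hedist
        _ = Metric.hausdorffDist (S ∩ ball x r)
            ((Γ₀ : Set (EuclideanSpace ℝ (Fin d))) ∩ ball x r) := Metric.hausdorffDist_comm
        _ < r/8 := hHD
    obtain ⟨q, hqS, hqd⟩ := (Metric.infDist_lt_iff hSne).mp hginf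
    have hqlow : r/2 ≤ ⟪e, q - x⟫ := by
      have h1 : ⟪e, g - x⟫ = 3*r/4 := by
        rw [hg]
        simp only [add_sub_cancel_right]
        rw [real_inner_smul_right, real_inner_self_eq_norm_sq, hen]
        ring
      have h2 : |⟪e, q - g⟫| ≤ r/8 := by
        calc |⟪e, q - g⟫| ≤ ‖e‖ * ‖q - g‖ := abs_real_inner_le_norm _ _
          _ = ‖q - g‖ := by rw [hen, one_mul]
          _ = dist g q := by rw [dist_eq_norm, norm_sub_rev]
          _ ≤ r/8 := le_of_lt hqd
      have h3 : ⟪e, q - x⟫ = ⟪e, g - x⟫ + ⟪e, q - g⟫ := by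
        rw [← inner_add_right]
        congr 1
        abel
      rw [h3, h1]
      have := (abs_le.mp h2).1
      linarith
    -- extend the families
    refine ⟨Fin.snoc p q, Fin.snoc u e, ?_, ?_, ?_, ?_⟩
    · intro i
      refine Fin.lastCases ?_ (fun i => ?_) i
      · simpa [Fin.snoc_last] using hqS
      · simpa [Fin.snoc_castSucc] using hpS i
    · intro i
      refine Fin.lastCases ?_ (fun i => ?_) i
      · simpa [Fin.snoc_last] using hen
      · simpa [Fin.snoc_castSucc] using hun i
    · intro k i hik
      rcases Fin.eq_castSucc_or_eq_last k with ⟨k', rfl⟩ | rfl <;>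
        rcases Fin.eq_castSucc_or_eq_last i with ⟨i', rfl⟩ | rfl
      · rw [Fin.snoc_castSucc, Fin.snoc_castSucc]
        exact hor k' i' (by simpa using hik)
      · exfalso
        have h1 : (k' : ℕ) < m := k'.isLt
        simp [Fin.val_last] at hik
        omega
      · rw [Fin.snoc_last, Fin.snoc_castSucc]
        exact heorth i'
      · simp at hik
    · intro k
      refine Fin.lastCases ?_ (fun k => ?_) k
      · rw [Fin.snoc_last, Fin.snoc_last]
        exact hqlow
      · rw [Fin.snoc_castSucc, Fin.snoc_castSucc]
        exact hlo k

set_option maxHeartbeats 2000000 in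
lemma small_delta_bound {n d : ℕ} {S : Set (EuclideanSpace ℝ (Fin d))}
    {x : EuclideanSpace ℝ (Fin d)} {r δ : ℝ} (hr : 0 < r) (hδ : 0 < δ)
    (hδs : δ ≤ r / (48 * 25^n * ((n:ℝ)+1)^2))
    (p u : Fin n → EuclideanSpace ℝ (Fin d))
    (hpA : ∀ i, p i ∈ S ∩ ball x r) (hun : ∀ i, ‖u i‖ = 1)
    (hor : ∀ k i : Fin n, (i:ℕ) < (k:ℕ) → ⟪u k, p i - x⟫ = 0)
    (hlo : ∀ k, r/2 ≤ ⟪u k, p k - x⟫)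
    (hxA : x ∈ S ∩ ball x r)
    (f : ↥(S ∩ ball x r) → ↥(ball (0 : EuclideanSpace ℝ (Fin n)) r))
    (hf : ∀ a b, |dist (f a) (f b) - dist a b| < δ) :
    ∃ Γ : AffineSubspace ℝ (EuclideanSpace ℝ (Fin d)), x ∈ Γ ∧
      Module.finrank ℝ Γ.direction = n ∧
      ∀ y ∈ S ∩ ball x r, Metric.infDist y (Γ : Set (EuclideanSpace ℝ (Fin d)))
        ≤ (1 + (n:ℝ) * (6 * 5^n)) * Real.sqrt (6*δ*r) := by
  classical
  set xh : ↥(S ∩ ball x r) := ⟨x, hxA⟩ with hxh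
  -- norm bounds between points
  have hnrm : ∀ a b : ↥(S ∩ ball x r), ‖(a:EuclideanSpace ℝ (Fin d)) - (b:EuclideanSpace ℝ (Fin d))‖ ≤ 2*r := by
    intro a b
    have ha : dist (a:EuclideanSpace ℝ (Fin d)) x < r := mem_ball.mp a.2.2
    have hb : dist (b:EuclideanSpace ℝ (Fin d)) x < r := mem_ball.mp b.2.2
    rw [← dist_eq_norm]
    calc dist (a:EuclideanSpace ℝ (Fin d)) b
        ≤ dist (a:EuclideanSpace ℝ (Fin d)) x + dist x b := dist_triangle _ _ _
      _ = dist (a:EuclideanSpace ℝ (Fin d)) x + dist (b:EuclideanSpace ℝ (Fin d)) x := by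
          rw [dist_comm x]
      _ ≤ 2*r := by linarith
  have hnrm' : ∀ a b : ↥(ball (0 : EuclideanSpace ℝ (Fin n)) r),
      ‖(a:EuclideanSpace ℝ (Fin n)) - (b:EuclideanSpace ℝ (Fin n))‖ ≤ 2*r := by
    intro a b
    have ha : dist (a:EuclideanSpace ℝ (Fin n)) 0 < r := mem_ball.mp a.2
    have hb : dist (b:EuclideanSpace ℝ (Fin n)) 0 < r := mem_ball.mp b.2
    rw [← dist_eq_norm]
    calc dist (a:EuclideanSpace ℝ (Fin n)) (b:EuclideanSpace ℝ (Fin n))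
        ≤ dist (a:EuclideanSpace ℝ (Fin n)) (0:EuclideanSpace ℝ (Fin n))
          + dist (0:EuclideanSpace ℝ (Fin n)) (b:EuclideanSpace ℝ (Fin n)) := dist_triangle _ _ _
      _ = dist (a:EuclideanSpace ℝ (Fin n)) 0 + dist (b:EuclideanSpace ℝ (Fin n)) 0 := by
          rw [dist_comm (0:EuclideanSpace ℝ (Fin n))]
      _ ≤ 2*r := by linarith
  have hdd : ∀ a b : ↥(S ∩ ball x r), |‖(a:EuclideanSpace ℝ (Fin d)) - b‖
      - ‖((f a):EuclideanSpace ℝ (Fin n)) - (f b)‖| ≤ δ := by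
    intro a b
    have := (hf a b).le
    rw [Subtype.dist_eq, Subtype.dist_eq, dist_eq_norm, dist_eq_norm] at this
    rwa [abs_sub_comm]
  -- inner product comparison
  have hic : ∀ a b : ↥(S ∩ ball x r),
      |⟪(a:EuclideanSpace ℝ (Fin d)) - x, (b:EuclideanSpace ℝ (Fin d)) - x⟫
        - ⟪((f a):EuclideanSpace ℝ (Fin n)) - (f xh), ((f b):EuclideanSpace ℝ (Fin n)) - (f xh)⟫|
      ≤ 6*δ*r := by
    intro a b
    exact inner_diff_bound (hnrm a b) (hnrm a xh) (hnrm b xh)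
      (hnrm' (f a) (f b)) (hnrm' (f a) (f xh)) (hnrm' (f b) (f xh))
      (hdd a b) (hdd a xh) (hdd b xh)
  set ph : Fin n → ↥(S ∩ ball x r) := fun i => ⟨p i, hpA i⟩ with hph
  set v : Fin n → EuclideanSpace ℝ (Fin d) := fun i => p i - x with hv
  set q' : Fin n → EuclideanSpace ℝ (Fin n) :=
    fun i => ((f (ph i)):EuclideanSpace ℝ (Fin n)) - (f xh) with hq'
  have close : ∀ i j, |⟪v i, v j⟫ - ⟪q' i, q' j⟫| ≤ 6*δ*r := fun i j => hic (ph i) (ph j)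
  have hvn : ∀ i, ‖v i‖ ≤ 2*r := fun i => hnrm (ph i) xh
  -- coefficient bounds
  have hcoef := coeff_bound hr v u hun hvn hor hlo
  have hcoef' : ∀ (μ : Fin n → ℝ) (k : Fin n),
      |μ k| ≤ 2/r * 5^n * ‖∑ i, μ i • v i‖ := by
    intro μ k
    refine le_trans (hcoef μ k) ?_
    have h5 : (5:ℝ)^(n - 1 - (k:ℕ)) ≤ 5^n :=
      pow_le_pow_right₀ (by norm_num) (by omega)
    have := mul_le_mul_of_nonneg_right
      (mul_le_mul_of_nonneg_left h5 (by positivity : (0:ℝ) ≤ 2/r)) (norm_nonneg (∑ i, μ i • v i))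
    exact this
  have hsum1 : ∀ μ : Fin n → ℝ, ∑ i, |μ i| ≤ (n:ℝ) * (2/r * 5^n * ‖∑ i, μ i • v i‖) := by
    intro μ
    have := Finset.sum_le_card_nsmul Finset.univ (fun i => |μ i|)
      (2/r * 5^n * ‖∑ i, μ i • v i‖) (fun i _ => hcoef' μ i)
    simpa [Finset.card_univ, nsmul_eq_mul] using this
  have hgram := gram_diff v q' close
  -- smallness: 6δr (Σ|μ|)² ≤ ½‖Σμv‖²
  have hδ2 : 48 * 25^n * (n:ℝ)^2 * δ ≤ r := by
    have hpos : (0:ℝ) < 48 * 25^n * ((n:ℝ)+1)^2 := by positivity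
    have h1 : 48 * 25^n * ((n:ℝ)+1)^2 * δ ≤ r := by
      rw [div_eq_mul_inv] at hδs
      calc 48 * 25^n * ((n:ℝ)+1)^2 * δ
          ≤ 48 * 25^n * ((n:ℝ)+1)^2 * (r * (48 * 25^n * ((n:ℝ)+1)^2)⁻¹) := by
            exact mul_le_mul_of_nonneg_left hδs (le_of_lt hpos)
        _ = r := by field_simp
    have h2 : (n:ℝ)^2 ≤ ((n:ℝ)+1)^2 := by nlinarith [Nat.cast_nonneg (α := ℝ) n]
    have h3 := mul_le_mul_of_nonneg_left h2 (show (0:ℝ) ≤ 48*25^n*δ by positivity)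
    nlinarith [h3]
  have hhalf : ∀ μ : Fin n → ℝ, 6*δ*r*(∑ i, |μ i|)^2 ≤ 1/2 * ‖∑ i, μ i • v i‖^2 := by
    intro μ
    set s := ‖∑ i, μ i • v i‖ with hsdef
    set t := ∑ i, |μ i| with htdef
    have ht0 : 0 ≤ t := Finset.sum_nonneg fun i _ => abs_nonneg _
    have hs0 : 0 ≤ s := norm_nonneg _
    have hsum1' : r * t ≤ 2*(n:ℝ)*5^n*s := by
      have := mul_le_mul_of_nonneg_left (hsum1 μ) hr.le
      calc r * t ≤ r * ((n:ℝ) * (2/r * 5^n * s)) := this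
        _ = 2*(n:ℝ)*5^n*s * (r/r) := by ring
        _ = 2*(n:ℝ)*5^n*s := by rw [div_self hr.ne', mul_one]
    have h1 : (r*t)^2 ≤ (2*(n:ℝ)*5^n*s)^2 :=
      pow_le_pow_left₀ (by positivity) hsum1' 2
    have hP5 : (25:ℝ)^n = 5^n * 5^n := by
      rw [show (25:ℝ) = 5*5 by norm_num, mul_pow]
    have h2 : 12*δ*(r*t)^2 ≤ 12*δ*(2*(n:ℝ)*5^n*s)^2 :=
      mul_le_mul_of_nonneg_left h1 (by positivity)
    have h3 : 12*δ*(2*(n:ℝ)*5^n*s)^2 = (48 * 25^n * (n:ℝ)^2 * δ) * s^2 := by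
      rw [hP5]; ring
    have h4 : (48 * 25^n * (n:ℝ)^2 * δ) * s^2 ≤ r * s^2 :=
      mul_le_mul_of_nonneg_right hδ2 (sq_nonneg s)
    have h5 : r * (12*δ*r*t^2) ≤ r * s^2 := by
      calc r * (12*δ*r*t^2) = 12*δ*(r*t)^2 := by ring
        _ ≤ r * s^2 := by linarith
    have h6 : 12*δ*r*t^2 ≤ s^2 := le_of_mul_le_mul_left h5 hr
    linarith
  -- norm bound ‖Σμv‖ ≤ 3r when ‖Σμq'‖ ≤ 2r
  have hs3 : ∀ μ : Fin n → ℝ, ‖∑ i, μ i • q' i‖ ≤ 2*r → ‖∑ i, μ i • v i‖ ≤ 3*r := by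
    intro μ hq2
    have hg := abs_le.mp (hgram μ)
    have hh := hhalf μ
    have h1 : ‖∑ i, μ i • v i‖^2 ≤ 8*r^2 := by nlinarith [norm_nonneg (∑ i, μ i • q' i)]
    nlinarith [norm_nonneg (∑ i, μ i • v i)]
  -- linear independence of v
  have hvli : LinearIndependent ℝ v := by
    rw [Fintype.linearIndependent_iff]
    intro g hg i
    have := hcoef' g i
    rw [hg, norm_zero, mul_zero] at this
    exact abs_eq_zero.mp (le_antisymm this (abs_nonneg _))
  -- linear independence of q'
  have hq'li : LinearIndependent ℝ q' := by
    rw [Fintype.linearIndependent_iff]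
    intro g hg i
    have hgr := abs_le.mp (hgram g)
    rw [hg, norm_zero] at hgr
    have hh := hhalf g
    have h1 : ‖∑ i, g i • v i‖^2 ≤ 0 := by nlinarith
    have h2 : ‖∑ i, g i • v i‖ = 0 := by
      nlinarith [norm_nonneg (∑ i, g i • v i)]
    have := hcoef' g i
    rw [h2, mul_zero] at this
    exact abs_eq_zero.mp (le_antisymm this (abs_nonneg _))
  have hsp : Submodule.span ℝ (Set.range q') = ⊤ := by
    apply Submodule.eq_top_of_finrank_eq
    rw [finrank_span_eq_card hq'li, Fintype.card_fin, finrank_euclideanSpace_fin]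
  -- the plane
  refine ⟨AffineSubspace.mk' x (Submodule.span ℝ (Set.range v)),
    AffineSubspace.self_mem_mk' _ _, ?_, ?_⟩
  · rw [AffineSubspace.direction_mk', finrank_span_eq_card hvli, Fintype.card_fin]
  intro y hy
  set yh : ↥(S ∩ ball x r) := ⟨y, hy⟩ with hyh
  set zq : EuclideanSpace ℝ (Fin n) := ((f yh):EuclideanSpace ℝ (Fin n)) - (f xh) with hzq
  have hzqmem : zq ∈ Submodule.span ℝ (Set.range q') := by rw [hsp]; trivial
  obtain ⟨lam, hrep⟩ := (Submodule.mem_span_range_iff_exists_fun ℝ).mp hzqmem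
  have hzq2 : ‖zq‖ ≤ 2*r := hnrm' (f yh) (f xh)
  have hs3y : ‖∑ i, lam i • v i‖ ≤ 3*r := hs3 lam (by rw [hrep]; exact hzq2)
  have hlamk : ∀ k, |lam k| ≤ 6*5^n := by
    intro k
    calc |lam k| ≤ 2/r * 5^n * ‖∑ i, lam i • v i‖ := hcoef' lam k
      _ ≤ 2/r * 5^n * (3*r) := by
          apply mul_le_mul_of_nonneg_left hs3y (by positivity)
      _ = 6*5^n * (r/r) := by ring
      _ = 6*5^n := by rw [div_self hr.ne', mul_one]
  have hlsum : ∑ i, |lam i| ≤ (n:ℝ) * (6*5^n) := by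
    have := Finset.sum_le_card_nsmul Finset.univ (fun i => |lam i|) (6*5^n)
      (fun i _ => hlamk i)
    simpa [Finset.card_univ, nsmul_eq_mul] using this
  set a : EuclideanSpace ℝ (Fin d) := y - x with ha
  set sv : EuclideanSpace ℝ (Fin d) := ∑ i, lam i • v i with hsv
  -- expansions
  have e1 : ‖a - sv‖^2 = ‖a‖^2 - 2*⟪a, sv⟫ + ‖sv‖^2 := norm_sub_sq_real a sv
  have d0 : |‖a‖^2 - ‖zq‖^2| ≤ 6*δ*r := by
    have := hic yh yh
    rwa [real_inner_self_eq_norm_sq, real_inner_self_eq_norm_sq] at this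
  have dmid : |⟪a, sv⟫ - ⟪zq, zq⟫| ≤ (∑ i, |lam i|) * (6*δ*r) := by
    have hv1 : ⟪a, sv⟫ = ∑ i, lam i * ⟪a, v i⟫ := by
      rw [hsv, inner_sum]
      exact Finset.sum_congr rfl fun i _ => real_inner_smul_right _ _ _
    have hv2 : ⟪zq, zq⟫ = ∑ i, lam i * ⟪zq, q' i⟫ := by
      nth_rewrite 2 [← hrep]
      rw [inner_sum]
      exact Finset.sum_congr rfl fun i _ => real_inner_smul_right _ _ _
    rw [hv1, hv2, ← Finset.sum_sub_distrib]
    calc |∑ i, (lam i * ⟪a, v i⟫ - lam i * ⟪zq, q' i⟫)|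
        ≤ ∑ i, |lam i * ⟪a, v i⟫ - lam i * ⟪zq, q' i⟫| := Finset.abs_sum_le_sum_abs _ _
      _ ≤ ∑ i, |lam i| * (6*δ*r) := by
          refine Finset.sum_le_sum fun i _ => ?_
          have : lam i * ⟪a, v i⟫ - lam i * ⟪zq, q' i⟫ = lam i * (⟪a, v i⟫ - ⟪zq, q' i⟫) := by
            ring
          rw [this, abs_mul]
          exact mul_le_mul_of_nonneg_left (hic yh (ph i)) (abs_nonneg _)
      _ = (∑ i, |lam i|) * (6*δ*r) := by rw [← Finset.sum_mul]
  have dlast : |‖sv‖^2 - ‖zq‖^2| ≤ 6*δ*r*(∑ i, |lam i|)^2 := by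
    have := hgram lam
    rwa [hrep, ← hsv] at this
  have ht0 : (0:ℝ) ≤ ∑ i, |lam i| := Finset.sum_nonneg fun i _ => abs_nonneg _
  have e3 : ‖a - sv‖^2 = (‖a‖^2-‖zq‖^2) - 2*(⟪a,sv⟫-⟪zq,zq⟫) + (‖sv‖^2-‖zq‖^2) := by
    rw [e1, real_inner_self_eq_norm_sq]; ring
  have e4 : ‖a - sv‖^2 ≤ 6*δ*r + 2*((∑ i, |lam i|) * (6*δ*r)) + 6*δ*r*(∑ i, |lam i|)^2 := by
    have k0 := abs_le.mp d0
    have k1 := abs_le.mp dmid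
    have k2 := abs_le.mp dlast
    rw [e3]; linarith
  have e5 : 6*δ*r + 2*((∑ i, |lam i|) * (6*δ*r)) + 6*δ*r*(∑ i, |lam i|)^2
      = 6*δ*r*(1+(∑ i, |lam i|))^2 := by ring
  have e6 : 6*δ*r*(1+(∑ i, |lam i|))^2 ≤ 6*δ*r*(1 + (n:ℝ)*(6*5^n))^2 := by
    apply mul_le_mul_of_nonneg_left _ (by positivity : (0:ℝ) ≤ 6*δ*r)
    apply pow_le_pow_left₀ (by linarith) (by linarith) 2
  have hfin2 : ‖a - sv‖^2 ≤ 6*δ*r*(1 + (n:ℝ)*(6*5^n))^2 := by linarith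
  -- conclude
  have hwmem : sv +ᵥ x ∈ AffineSubspace.mk' x (Submodule.span ℝ (Set.range v)) := by
    apply AffineSubspace.vadd_mem_mk'
    exact Submodule.sum_mem _ fun i _ =>
      Submodule.smul_mem _ _ (Submodule.subset_span ⟨i, rfl⟩)
  have hdist : Metric.infDist y
      ((AffineSubspace.mk' x (Submodule.span ℝ (Set.range v)) : AffineSubspace ℝ _) :
        Set (EuclideanSpace ℝ (Fin d))) ≤ ‖a - sv‖ := by
    have h := Metric.infDist_le_dist_of_mem (x := y) hwmem
    calc Metric.infDist y _ ≤ dist y (sv +ᵥ x) := h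
      _ = ‖a - sv‖ := by
          rw [dist_eq_norm]
          congr 1
          show y - (sv + x) = (y - x) - sv
          abel
  refine le_trans hdist ?_
  have h1 : ‖a - sv‖ = Real.sqrt (‖a - sv‖^2) := (Real.sqrt_sq (norm_nonneg _)).symm
  rw [h1]
  calc Real.sqrt (‖a - sv‖^2) ≤ Real.sqrt (6*δ*r*(1 + (n:ℝ)*(6*5^n))^2) :=
        Real.sqrt_le_sqrt hfin2
    _ = (1 + (n:ℝ)*(6*5^n)) * Real.sqrt (6*δ*r) := by
        rw [Real.sqrt_mul (by positivity), Real.sqrt_sq (by positivity)]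
        ring

lemma exists_plane {d : ℕ} (n : ℕ) (hnd : n ≤ d) (x : EuclideanSpace ℝ (Fin d)) :
    ∃ Γ : AffineSubspace ℝ (EuclideanSpace ℝ (Fin d)),
      x ∈ Γ ∧ finrank ℝ Γ.direction = n := by
  set g : Fin n → EuclideanSpace ℝ (Fin d) :=
    (⇑((EuclideanSpace.basisFun (Fin d) ℝ).toBasis)) ∘ (Fin.castLE hnd) with hg
  have hli : LinearIndependent ℝ g :=
    ((EuclideanSpace.basisFun (Fin d) ℝ).toBasis.linearIndependent).comp _
      (Fin.castLE_injective hnd)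
  refine ⟨AffineSubspace.mk' x (Submodule.span ℝ (Set.range g)),
    AffineSubspace.self_mem_mk' _ _, ?_⟩
  rw [AffineSubspace.direction_mk', finrank_span_eq_card hli, Fintype.card_fin]


set_option maxHeartbeats 1000000 in
theorem stmt15 (n : ℕ) :
    ∃ C : ℝ, 0 < C ∧
      ∀ (d : ℕ) (S : Set (EuclideanSpace ℝ (Fin d)))
        (x : EuclideanSpace ℝ (Fin d)) (r : ℝ),
        n < d → x ∈ S → 0 < r → alphaNum n S x r < 1 / 8 →
        betaNum n S x r ≤ 100 * C * Real.sqrt (bTilde n S x r) := by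
  classical
  refine ⟨1000 * 25^n * ((n:ℝ)+1)^2, by positivity, ?_⟩
  set C : ℝ := 1000 * 25^n * ((n:ℝ)+1)^2 with hCdef
  have hC : 0 < C := by positivity
  intro d S x r hnd hxS hr hα
  have hxA : x ∈ S ∩ ball x r := ⟨hxS, mem_ball_self hr⟩
  have hSne : (S ∩ ball x r).Nonempty := ⟨x, hxA⟩
  -- the β-defining set is bounded below by 0
  have hβset : ∀ t ∈ {t : ℝ | ∃ Γ : AffineSubspace ℝ (EuclideanSpace ℝ (Fin d)),
      x ∈ Γ ∧ Module.finrank ℝ Γ.direction = n ∧ t = planeSup S Γ x r}, 0 ≤ t := by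
    rintro t ⟨Γ, -, -, rfl⟩
    apply mul_nonneg (inv_nonneg.mpr hr.le)
    exact Real.sSup_nonneg fun z hz => by
      obtain ⟨y, -, rfl⟩ := hz
      exact Metric.infDist_nonneg
  have hβbdd : BddBelow {t : ℝ | ∃ Γ : AffineSubspace ℝ (EuclideanSpace ℝ (Fin d)),
      x ∈ Γ ∧ Module.finrank ℝ Γ.direction = n ∧ t = planeSup S Γ x r} := ⟨0, hβset⟩
  have hβ0 : 0 ≤ betaNum n S x r := Real.sInf_nonneg hβset
  have hβle : ∀ (Γ : AffineSubspace ℝ (EuclideanSpace ℝ (Fin d))), x ∈ Γ →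
      Module.finrank ℝ Γ.direction = n → betaNum n S x r ≤ planeSup S Γ x r := by
    intro Γ h1 h2
    exact csInf_le hβbdd ⟨Γ, h1, h2, rfl⟩
  -- extract a good α-plane
  obtain ⟨Γ₀, hΓ₀x, hΓ₀rank, hΓ₀HD⟩ : ∃ Γ₀ : AffineSubspace ℝ (EuclideanSpace ℝ (Fin d)),
      x ∈ Γ₀ ∧ Module.finrank ℝ Γ₀.direction = n ∧ planeHD S Γ₀ x r < 1/8 := by
    by_contra hcon
    push_neg at hcon
    obtain ⟨Γ', hΓ'x, hΓ'rank⟩ := exists_plane n hnd.le x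
    have hTne : {t : ℝ | ∃ Γ : AffineSubspace ℝ (EuclideanSpace ℝ (Fin d)),
        x ∈ Γ ∧ Module.finrank ℝ Γ.direction = n ∧ t = planeHD S Γ x r}.Nonempty :=
      ⟨planeHD S Γ' x r, Γ', hΓ'x, hΓ'rank, rfl⟩
    have : (1:ℝ)/8 ≤ alphaNum n S x r := by
      apply le_csInf hTne
      rintro t ⟨Γ, h1, h2, rfl⟩
      exact hcon Γ h1 h2
    linarith
  have hHD : Metric.hausdorffDist (S ∩ ball x r)
      ((Γ₀ : Set (EuclideanSpace ℝ (Fin d))) ∩ ball x r) < r/8 := by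
    have h1 : r⁻¹ * Metric.hausdorffDist (S ∩ ball x r)
        ((Γ₀ : Set (EuclideanSpace ℝ (Fin d))) ∩ ball x r) < 1/8 := hΓ₀HD
    have h2 := mul_lt_mul_of_pos_left h1 hr
    rw [← mul_assoc, mul_inv_cancel₀ hr.ne', one_mul] at h2
    linarith
  -- β < 1/8 via Γ₀
  have hβ8 : betaNum n S x r ≤ 1/8 := by
    refine le_trans (hβle Γ₀ hΓ₀x hΓ₀rank) ?_
    have hedist : EMetric.hausdorffEdist (S ∩ ball x r)
        ((Γ₀ : Set (EuclideanSpace ℝ (Fin d))) ∩ ball x r) ≠ ⊤ :=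
      Metric.hausdorffEdist_ne_top_of_nonempty_of_bounded hSne ⟨x, hΓ₀x, mem_ball_self hr⟩
        (isBounded_ball.subset inter_subset_right) (isBounded_ball.subset inter_subset_right)
    have hsup : sSup ((fun y => Metric.infDist y
        ((Γ₀ : Set (EuclideanSpace ℝ (Fin d))))) '' (S ∩ ball x r)) ≤ r/8 := by
      apply Real.sSup_le _ (by linarith)
      rintro z ⟨y, hy, rfl⟩
      calc Metric.infDist y (Γ₀ : Set (EuclideanSpace ℝ (Fin d)))
          ≤ Metric.infDist y ((Γ₀ : Set (EuclideanSpace ℝ (Fin d))) ∩ ball x r) :=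
            Metric.infDist_le_infDist_of_subset inter_subset_left ⟨x, hΓ₀x, mem_ball_self hr⟩
        _ ≤ Metric.hausdorffDist (S ∩ ball x r)
            ((Γ₀ : Set (EuclideanSpace ℝ (Fin d))) ∩ ball x r) :=
            Metric.infDist_le_hausdorffDist_of_mem hy hedist
        _ ≤ r/8 := hHD.le
    calc planeSup S Γ₀ x r ≤ r⁻¹ * (r/8) := by
          apply mul_le_mul_of_nonneg_left hsup (inv_nonneg.mpr hr.le)
      _ = 1/8 * (r/r) := by ring
      _ = 1/8 := by rw [div_self hr.ne', mul_one]
  -- the frame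
  obtain ⟨p, u, hpA, hun, hor, hlo⟩ := exists_frame hr hxS hΓ₀x hΓ₀rank hHD
  -- the key estimate
  set D : Set ℝ := {δ : ℝ | 0 < δ ∧
    ∃ f : ↥(S ∩ Metric.ball x r) → ↥(Metric.ball (0 : EuclideanSpace ℝ (Fin n)) r),
      ∀ a b, |dist (f a) (f b) - dist a b| < δ} with hDdef
  have hP1 : (1:ℝ) ≤ 25^n := one_le_pow₀ (by norm_num)
  have hn1 : (1:ℝ) ≤ (n:ℝ)+1 := by
    have := Nat.cast_nonneg (α := ℝ) n; linarith
  have key : ∀ δ ∈ D, betaNum n S x r ^ 2 * r ≤ C^2 * δ := by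
    rintro δ ⟨hδpos, f, hf⟩
    by_cases hcase : δ ≤ r / (48 * 25^n * ((n:ℝ)+1)^2)
    · -- small δ: use the construction
      obtain ⟨Γ, hΓx, hΓrank, hΓbd⟩ := small_delta_bound hr hδpos hcase p u hpA hun hor hlo
        hxA f hf
      have hps : planeSup S Γ x r ≤ r⁻¹ * ((1 + (n:ℝ) * (6 * 5^n)) * Real.sqrt (6*δ*r)) := by
        apply mul_le_mul_of_nonneg_left _ (inv_nonneg.mpr hr.le)
        apply Real.sSup_le
        · rintro z ⟨y, hy, rfl⟩
          exact hΓbd y hy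
        · positivity
      have hβb : betaNum n S x r ≤ r⁻¹ * ((1 + (n:ℝ) * (6 * 5^n)) * Real.sqrt (6*δ*r)) :=
        le_trans (hβle Γ hΓx hΓrank) hps
      have hsq : (r⁻¹ * ((1 + (n:ℝ) * (6 * 5^n)) * Real.sqrt (6*δ*r)))^2
          = r⁻¹^2 * (1 + (n:ℝ) * (6 * 5^n))^2 * (6*δ*r) := by
        rw [mul_pow, mul_pow, Real.sq_sqrt (by positivity)]; ring
      have hβsq : betaNum n S x r ^ 2 ≤ r⁻¹^2 * (1 + (n:ℝ) * (6 * 5^n))^2 * (6*δ*r) := by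
        rw [← hsq]
        exact pow_le_pow_left₀ hβ0 hβb 2
      have hrr : r⁻¹^2 * (1 + (n:ℝ) * (6 * 5^n))^2 * (6*δ*r) * r
          = (1 + (n:ℝ) * (6 * 5^n))^2 * (6*δ) * (r⁻¹ * r) * (r⁻¹ * r) := by ring
      have hr1 : r⁻¹ * r = 1 := inv_mul_cancel₀ hr.ne'
      have hβr : betaNum n S x r ^ 2 * r ≤ (1 + (n:ℝ) * (6 * 5^n))^2 * (6*δ) := by
        have := mul_le_mul_of_nonneg_right hβsq hr.le
        rw [hrr, hr1] at this
        simpa using this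
      -- numeric: 6(1+6n5^n)² ≤ C²
      have hnum : (1 + (n:ℝ) * (6 * 5^n))^2 * 6 ≤ C^2 := by
        have h5 : (1:ℝ) ≤ 5^n := one_le_pow₀ (by norm_num)
        have h25 : (25:ℝ)^n = 5^n * 5^n := by
          rw [show (25:ℝ) = 5*5 by norm_num, mul_pow]
        have hb : 1 + (n:ℝ) * (6 * 5^n) ≤ 7 * 5^n * ((n:ℝ)+1) := by nlinarith
        have hb0 : (0:ℝ) ≤ 1 + (n:ℝ) * (6 * 5^n) := by positivity
        have hb2 : (1 + (n:ℝ) * (6 * 5^n))^2 ≤ (7 * 5^n * ((n:ℝ)+1))^2 :=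
          pow_le_pow_left₀ hb0 hb 2
        have e49 : (7 * (5:ℝ)^n * ((n:ℝ)+1))^2 = 49 * (25^n * ((n:ℝ)+1)^2) := by
          rw [h25]; ring
        have hX1 : (1:ℝ) ≤ 25^n * ((n:ℝ)+1)^2 := by nlinarith
        have c1 : (1 + (n:ℝ) * (6 * 5^n))^2 * 6 ≤ 294 * (25^n * ((n:ℝ)+1)^2) := by
          rw [e49] at hb2; linarith
        have c2 : (294:ℝ) * (25^n * ((n:ℝ)+1)^2) ≤ 1000000 * (25^n * ((n:ℝ)+1)^2)^2 := by
          nlinarith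
        have c3 : C^2 = 1000000 * (25^n * ((n:ℝ)+1)^2)^2 := by rw [hCdef]; ring
        rw [c3]; linarith
      calc betaNum n S x r ^ 2 * r ≤ (1 + (n:ℝ) * (6 * 5^n))^2 * (6*δ) := hβr
        _ = ((1 + (n:ℝ) * (6 * 5^n))^2 * 6) * δ := by ring
        _ ≤ C^2 * δ := mul_le_mul_of_nonneg_right hnum hδpos.le
    · -- large δ
      push_neg at hcase
      have hδ0 : r / (48 * 25^n * ((n:ℝ)+1)^2) < δ := hcase
      have hβsq : betaNum n S x r ^ 2 ≤ 1/64 := by nlinarith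
      have h1 : betaNum n S x r ^ 2 * r ≤ r/64 := by nlinarith
      have h2 : r/64 ≤ C^2 * (r / (48 * 25^n * ((n:ℝ)+1)^2)) := by
        have hX0 : (0:ℝ) < 48 * 25^n * ((n:ℝ)+1)^2 := by positivity
        have e : C^2 * (r / (48 * 25^n * ((n:ℝ)+1)^2))
            = (1000000 / 48 * (25^n * ((n:ℝ)+1)^2)) * r := by
          rw [hCdef]; field_simp; ring
        rw [e]
        have hX1 : (1:ℝ) ≤ 25^n * ((n:ℝ)+1)^2 := by nlinarith
        nlinarith [hr.le]
      calc betaNum n S x r ^ 2 * r ≤ r/64 := h1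
        _ ≤ C^2 * (r / (48 * 25^n * ((n:ℝ)+1)^2)) := h2
        _ ≤ C^2 * δ := mul_le_mul_of_nonneg_left hδ0.le (by positivity)
  -- D is nonempty
  have hDne : D.Nonempty := by
    refine ⟨2*r+1, by linarith, fun _ => ⟨0, mem_ball_self hr⟩, fun a b => ?_⟩
    have hab : dist a b < 2*r := by
      rw [Subtype.dist_eq]
      have ha : dist (a : EuclideanSpace ℝ (Fin d)) x < r := mem_ball.mp a.2.2
      have hb : dist (b : EuclideanSpace ℝ (Fin d)) x < r := mem_ball.mp b.2.2
      calc dist (a : EuclideanSpace ℝ (Fin d)) (b : EuclideanSpace ℝ (Fin d))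
          ≤ dist (a : EuclideanSpace ℝ (Fin d)) x + dist x (b : EuclideanSpace ℝ (Fin d)) :=
            dist_triangle _ _ _
        _ = dist (a : EuclideanSpace ℝ (Fin d)) x + dist (b : EuclideanSpace ℝ (Fin d)) x := by
            rw [dist_comm x]
        _ < 2*r := by linarith
    rw [dist_self, zero_sub, abs_neg, abs_of_nonneg dist_nonneg]
    linarith
  -- conclude
  have hinf : betaNum n S x r ^ 2 * r / C^2 ≤ sInf D := by
    apply le_csInf hDne
    intro δ hδ
    rw [div_le_iff₀ (by positivity)]
    calc betaNum n S x r ^ 2 * r ≤ C^2 * δ := key δ hδ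
      _ = δ * C^2 := by ring
  have h3 : betaNum n S x r ^ 2 / C^2 ≤ bTilde n S x r := by
    have h1 : r⁻¹ * (betaNum n S x r ^ 2 * r / C^2) ≤ r⁻¹ * sInf D :=
      mul_le_mul_of_nonneg_left hinf (inv_nonneg.mpr hr.le)
    have h2 : r⁻¹ * (betaNum n S x r ^ 2 * r / C^2) = betaNum n S x r ^ 2 / C^2 := by
      field_simp
    rw [h2] at h1
    exact h1
  have hbT : betaNum n S x r ^ 2 ≤ C^2 * bTilde n S x r := by
    rw [div_le_iff₀ (by positivity : (0:ℝ) < C^2)] at h3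
    linarith
  have hfin : betaNum n S x r ≤ C * Real.sqrt (bTilde n S x r) := by
    have h4 : betaNum n S x r = Real.sqrt (betaNum n S x r ^ 2) := (Real.sqrt_sq hβ0).symm
    rw [h4]
    calc Real.sqrt (betaNum n S x r ^ 2) ≤ Real.sqrt (C^2 * bTilde n S x r) :=
          Real.sqrt_le_sqrt hbT
      _ = C * Real.sqrt (bTilde n S x r) := by
          rw [Real.sqrt_mul (sq_nonneg C), Real.sqrt_sq hC.le]
  have hsq0 := Real.sqrt_nonneg (bTilde n S x r)
  nlinarith [hfin, hC, hsq0]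


end
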